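/- Fix α ∈ [0,1]. (1) If G₁ and G₂ are A_α-cospectral regular graphs and H is an arbitrary graph, then the subdivision-vertex joins G₁ ∨̇ H and G₂ ∨̇ H are A_α-cospectral. (2) If H₁ and H₂ are A_α-cospectral graphs with equal A_α-coronals Γ_{A_α(H₁)}(x) = Γ_{A_α(H₂)}(x), and G is a regular graph, then G ∨̇ H₁ and G ∨̇ H₂ are A_α-cospectral. -/

import Mathlib

open Matrix Polynomial
open scoped Classical

noncomputable section

/-- `A_α(G) = α·D(G) + (1-α)·A(G)`, where `D(G)` is the diagonal degree matrix and
`A(G)` the adjacency matrix. -/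
def Aalpha {V : Type*} [Fintype V] (G : SimpleGraph V) (α : ℝ) : Matrix V V ℝ :=
  α • Matrix.diagonal (fun v => (G.degree v : ℝ)) + (1 - α) • G.adjMatrix ℝ

/-- The `M`-coronal `Γ_M(x) = 1ᵀ (xI − M)⁻¹ 1`, i.e. the sum of the entries of
`(xI − M)⁻¹`. -/
def coronal {n : Type*} [Fintype n] (M : Matrix n n ℝ) (x : ℝ) : ℝ :=
  ∑ i, ∑ j, (x • (1 : Matrix n n ℝ) - M)⁻¹ i j

/-- The subdivision-vertex join `G₁ ∨̇ G₂`: take the subdivision graph `S(G₁)` (a new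
vertex inserted in each edge of `G₁`) together with `G₂`, and join every original vertex
of `G₁` with every vertex of `G₂`. -/
def subdivisionVertexJoin {V₁ V₂ : Type*} (G₁ : SimpleGraph V₁) (G₂ : SimpleGraph V₂) :
    SimpleGraph (V₁ ⊕ (↥G₁.edgeSet ⊕ V₂)) :=
  SimpleGraph.fromRel fun a b =>
    match a, b with
    | Sum.inl v, Sum.inr (Sum.inl e) => v ∈ (e : Sym2 V₁)
    | Sum.inl _, Sum.inr (Sum.inr _) => True
    | Sum.inr (Sum.inr u), Sum.inr (Sum.inr w) => G₂.Adj u w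
    | _, _ => False

set_option linter.unusedSectionVars false


variable {V₁ V₂ : Type*} (G : SimpleGraph V₁) (H : SimpleGraph V₂)

lemma svj_adj_ll (v w : V₁) : (subdivisionVertexJoin G H).Adj (Sum.inl v) (Sum.inl w) ↔ False := by
  simp [subdivisionVertexJoin, SimpleGraph.fromRel_adj]

lemma svj_adj_le (v : V₁) (e : ↥G.edgeSet) :
    (subdivisionVertexJoin G H).Adj (Sum.inl v) (Sum.inr (Sum.inl e)) ↔ v ∈ (e : Sym2 V₁) := by
  simp [subdivisionVertexJoin, SimpleGraph.fromRel_adj]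

lemma svj_adj_lr (v : V₁) (u : V₂) :
    (subdivisionVertexJoin G H).Adj (Sum.inl v) (Sum.inr (Sum.inr u)) ↔ True := by
  simp [subdivisionVertexJoin, SimpleGraph.fromRel_adj]

lemma svj_adj_ee (e e' : ↥G.edgeSet) :
    (subdivisionVertexJoin G H).Adj (Sum.inr (Sum.inl e)) (Sum.inr (Sum.inl e')) ↔ False := by
  simp [subdivisionVertexJoin, SimpleGraph.fromRel_adj]

lemma svj_adj_er (e : ↥G.edgeSet) (u : V₂) :
    (subdivisionVertexJoin G H).Adj (Sum.inr (Sum.inl e)) (Sum.inr (Sum.inr u)) ↔ False := by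
  simp [subdivisionVertexJoin, SimpleGraph.fromRel_adj]

lemma svj_adj_rr (u u' : V₂) :
    (subdivisionVertexJoin G H).Adj (Sum.inr (Sum.inr u)) (Sum.inr (Sum.inr u')) ↔ H.Adj u u' := by
  simp only [subdivisionVertexJoin, SimpleGraph.fromRel_adj, Sum.inr.injEq, Sum.inl.injEq, ne_eq]
  constructor
  · rintro ⟨h1, h2 | h2⟩ <;> [exact h2; exact h2.symm]
  · intro h; exact ⟨by simp [h.ne], Or.inl h⟩

variable {V : Type*} [Fintype V] (G : SimpleGraph V)

lemma sum_row_adj (v : V) : ∑ w, (if G.Adj v w then (1:ℝ) else 0) = G.degree v := by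
  rw [Finset.sum_boole]
  congr 1
  rw [← SimpleGraph.neighborFinset_eq_filter, SimpleGraph.card_neighborFinset_eq_degree]

lemma sum_incidence (v : V) :
    ∑ e : ↥G.edgeSet, (if v ∈ (e : Sym2 V) then (1:ℝ) else 0) = G.degree v := by
  rw [Finset.sum_boole]
  congr 1
  rw [← Fintype.card_subtype]
  rw [← SimpleGraph.card_incidenceSet_eq_degree]
  apply Fintype.card_congr
  exact (Equiv.subtypeSubtypeEquivSubtypeInter (· ∈ G.edgeSet) (v ∈ ·)).trans
    (Equiv.subtypeEquivRight (fun e => by simp [SimpleGraph.incidenceSet]))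

lemma sum_mem_edge (e : ↥G.edgeSet) :
    ∑ v : V, (if v ∈ (e : Sym2 V) then (1:ℝ) else 0) = 2 := by
  obtain ⟨e, he⟩ := e
  induction e with
  | _ a b =>
    have hab : a ≠ b := by
      intro h; subst h; exact G.irrefl (G.mem_edgeSet.mp he)
    rw [Finset.sum_boole]
    have h2 : Finset.univ.filter (fun v => v ∈ s(a,b)) = {a, b} := by
      ext v; simp [Sym2.mem_iff]
    rw [h2, Finset.card_insert_of_notMem (by simp [hab]), Finset.card_singleton]
    norm_num

variable {W₁ W₂ : Type*} [Fintype W₁] [Fintype W₂] (G : SimpleGraph W₁) (H : SimpleGraph W₂)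

lemma svj_degree_inl (v : W₁) :
    (((subdivisionVertexJoin G H).degree (Sum.inl v) : ℝ)) = G.degree v + Fintype.card W₂ := by
  rw [← sum_row_adj, Fintype.sum_sum_type, Fintype.sum_sum_type]
  simp only [svj_adj_ll, svj_adj_le, svj_adj_lr, if_false, if_true, Finset.sum_const_zero,
    Finset.sum_const, nsmul_eq_mul, mul_one, zero_add, sum_incidence, if_neg (fun h => h)]
  simp [sum_incidence]

lemma svj_degree_edge (e : ↥G.edgeSet) :
    (((subdivisionVertexJoin G H).degree (Sum.inr (Sum.inl e)) : ℝ)) = 2 := by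
  rw [← sum_row_adj, Fintype.sum_sum_type, Fintype.sum_sum_type]
  have : ∀ v : W₁, (subdivisionVertexJoin G H).Adj (Sum.inr (Sum.inl e)) (Sum.inl v)
      ↔ v ∈ (e : Sym2 W₁) := by
    intro v; rw [SimpleGraph.adj_comm]; exact svj_adj_le G H v e
  simp only [this, svj_adj_ee, svj_adj_er, if_false, Finset.sum_const_zero, add_zero]
  simpa using sum_mem_edge G e

lemma svj_degree_inr (u : W₂) :
    (((subdivisionVertexJoin G H).degree (Sum.inr (Sum.inr u)) : ℝ)) = H.degree u + Fintype.card W₁ := by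
  rw [← sum_row_adj, Fintype.sum_sum_type, Fintype.sum_sum_type]
  have h1 : ∀ v : W₁, (subdivisionVertexJoin G H).Adj (Sum.inr (Sum.inr u)) (Sum.inl v) ↔ True := by
    intro v; rw [SimpleGraph.adj_comm]; exact svj_adj_lr G H v u
  have h2 : ∀ e : ↥G.edgeSet,
      (subdivisionVertexJoin G H).Adj (Sum.inr (Sum.inr u)) (Sum.inr (Sum.inl e)) ↔ False := by
    intro e; rw [SimpleGraph.adj_comm]; exact svj_adj_er G H e u
  simp only [h1, h2, svj_adj_rr, if_true, if_false, Finset.sum_const_zero, Finset.sum_const,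
    nsmul_eq_mul, mul_one, zero_add, add_zero]
  rw [sum_row_adj, Finset.card_univ]
  ring


def Rinc {W : Type*} (G : SimpleGraph W) : Matrix W ↥G.edgeSet ℝ :=
  Matrix.of fun v e => if v ∈ (e : Sym2 W) then 1 else 0

def onesMat (A B : Type*) : Matrix A B ℝ := Matrix.of fun _ _ => 1

lemma svj_adj_el (e : ↥G.edgeSet) (v : W₁) :
    (subdivisionVertexJoin G H).Adj (Sum.inr (Sum.inl e)) (Sum.inl v) ↔ v ∈ (e : Sym2 W₁) := by
  rw [SimpleGraph.adj_comm]; exact svj_adj_le G H v e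

lemma svj_adj_rl (u : W₂) (v : W₁) :
    (subdivisionVertexJoin G H).Adj (Sum.inr (Sum.inr u)) (Sum.inl v) ↔ True := by
  rw [SimpleGraph.adj_comm]; exact svj_adj_lr G H v u

lemma svj_adj_re (u : W₂) (e : ↥G.edgeSet) :
    (subdivisionVertexJoin G H).Adj (Sum.inr (Sum.inr u)) (Sum.inr (Sum.inl e)) ↔ False := by
  rw [SimpleGraph.adj_comm]; exact svj_adj_er G H e u

lemma block_decomp {r : ℕ} (hr : G.IsRegularOfDegree r) (α x : ℝ) :
    x • (1 : Matrix (W₁ ⊕ (↥G.edgeSet ⊕ W₂)) (W₁ ⊕ (↥G.edgeSet ⊕ W₂)) ℝ)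
      - Aalpha (subdivisionVertexJoin G H) α =
    Matrix.fromBlocks
      ((x - α*(r + Fintype.card W₂)) • 1)
      (Matrix.fromCols ((-(1-α)) • Rinc G) ((-(1-α)) • onesMat W₁ W₂))
      (Matrix.fromRows ((-(1-α)) • (Rinc G)ᵀ) ((-(1-α)) • onesMat W₂ W₁))
      (Matrix.fromBlocks ((x - 2*α) • 1) 0 0
        ((x - α*Fintype.card W₁) • (1 : Matrix W₂ W₂ ℝ) - Aalpha H α)) := by
  have hdeg : ∀ v, (G.degree v : ℝ) = r := fun v => by rw [hr v]
  ext a b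
  rcases a with v | e | u <;> rcases b with w | e' | u' <;>
    simp only [Matrix.sub_apply, Matrix.smul_apply, Matrix.one_apply, Matrix.add_apply,
      Aalpha, Matrix.diagonal_apply, SimpleGraph.adjMatrix_apply,
      Matrix.fromBlocks_apply₁₁, Matrix.fromBlocks_apply₁₂, Matrix.fromBlocks_apply₂₁,
      Matrix.fromBlocks_apply₂₂, Matrix.fromRows_apply_inl, Matrix.fromRows_apply_inr,
      Matrix.fromCols_apply_inl, Matrix.fromCols_apply_inr,
      Rinc, onesMat, Matrix.of_apply, Matrix.transpose_apply, Matrix.zero_apply,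
      svj_adj_ll, svj_adj_le, svj_adj_lr, svj_adj_ee, svj_adj_er, svj_adj_rr,
      svj_adj_el, svj_adj_rl, svj_adj_re,
      Sum.inl.injEq, Sum.inr.injEq, if_true, if_false, smul_eq_mul] <;>
    simp only [svj_degree_inl G H, svj_degree_edge G H, svj_degree_inr G H, hdeg,
      reduceCtorEq, if_false, if_true] <;>
    ((try split_ifs) <;> ring)

lemma RRT {r : ℕ} (hr : G.IsRegularOfDegree r) :
    Rinc G * (Rinc G)ᵀ = (r : ℝ) • (1 : Matrix W₁ W₁ ℝ) + G.adjMatrix ℝ := by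
  ext v w
  simp only [Matrix.mul_apply, Matrix.transpose_apply, Rinc, Matrix.of_apply,
    Matrix.add_apply, Matrix.smul_apply, Matrix.one_apply, SimpleGraph.adjMatrix_apply,
    ite_mul, one_mul, zero_mul, smul_eq_mul]
  by_cases h : v = w
  · subst h
    simp only [if_pos rfl, mul_one, G.irrefl, if_false, ite_self]
    have hc : ∀ e : ↥G.edgeSet,
        (if v ∈ (e : Sym2 W₁) then (if v ∈ (e : Sym2 W₁) then (1:ℝ) else 0) else 0)
          = if v ∈ (e : Sym2 W₁) then (1:ℝ) else 0 := by
      intro e; by_cases hv : v ∈ (e : Sym2 W₁) <;> simp [hv]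
    rw [Finset.sum_congr rfl (fun e _ => hc e),
      show (∑ e : ↥G.edgeSet, if v ∈ (e : Sym2 W₁) then (1:ℝ) else 0) = G.degree v from
      sum_incidence G v, hr v]
    simp
  · rw [if_neg h, mul_zero, zero_add]
    have key : ∀ e : ↥G.edgeSet,
        (if v ∈ (e : Sym2 W₁) then (if w ∈ (e : Sym2 W₁) then (1:ℝ) else 0) else 0)
          = if (e : Sym2 W₁) = s(v, w) then 1 else 0 := by
      intro e
      by_cases hv : v ∈ (e : Sym2 W₁) <;> by_cases hw : w ∈ (e : Sym2 W₁)
      · rw [if_pos hv, if_pos hw, if_pos ((Sym2.mem_and_mem_iff h).mp ⟨hv, hw⟩)]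
      · rw [if_pos hv, if_neg hw, if_neg (fun he => hw (by rw [he]; simp))]
      · rw [if_neg hv, if_neg (fun he => hv (by rw [he]; simp))]
      · rw [if_neg hv, if_neg (fun he => hv (by rw [he]; simp))]
    rw [Finset.sum_congr rfl (fun e _ => key e)]
    by_cases hadj : G.Adj v w
    · rw [if_pos hadj]
      rw [Finset.sum_eq_single (⟨s(v,w), hadj⟩ : ↥G.edgeSet)]
      · simp
      · intro e _ hne
        rw [if_neg (fun he => hne (Subtype.ext he))]
      · simp
    · rw [if_neg hadj]
      apply Finset.sum_eq_zero
      intro e _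
      rw [if_neg (fun he => hadj (G.mem_edgeSet.mp (by rw [← he]; exact e.2)))]

lemma eval_charpoly'' {m : Type*} [Fintype m] [DecidableEq m] (M : Matrix m m ℝ) (x : ℝ) :
    (M.charpoly).eval x = Matrix.det (x • (1 : Matrix m m ℝ) - M) := by
  rw [Matrix.charpoly, ← Polynomial.coe_evalRingHom, RingHom.map_det]
  congr 1
  ext i j
  by_cases h : i = j <;>
    simp [h, Matrix.charmatrix_apply, Matrix.one_apply, Matrix.diagonal_apply]


/-- `charpoly` with the ambient (classical) instances fixed once and for all. -/
def cpC {W : Type*} [Fintype W] (M : Matrix W W ℝ) : ℝ[X] := M.charpoly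

def cfun (α x : ℝ) : ℝ := (1-α)^2 * (x - 2*α)⁻¹
def ffun (α x : ℝ) (r k : ℕ) : ℝ := x - α*(r+k) - cfun α x * r

lemma ones_mul_mul_ones {M : Matrix W₂ W₂ ℝ} :
    onesMat W₁ W₂ * M * onesMat W₂ W₁ = (∑ i, ∑ j, M i j) • onesMat W₁ W₁ := by
  ext a b
  simp only [Matrix.mul_apply, onesMat, Matrix.of_apply, Matrix.smul_apply, one_mul, mul_one,
    smul_eq_mul]
  rw [Finset.sum_comm]

lemma key {r : ℕ} (hr : G.IsRegularOfDegree r) (α x : ℝ)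
    (hx1 : x - 2*α ≠ 0)
    (hH : Matrix.det ((x - α*(Fintype.card W₁)) • (1 : Matrix W₂ W₂ ℝ) - Aalpha H α) ≠ 0)
    (hfc : ffun α x r (Fintype.card W₂) - cfun α x * r ≠ 0)
    (hN : Matrix.det (ffun α x r (Fintype.card W₂) • (1 : Matrix W₁ W₁ ℝ)
            - cfun α x • G.adjMatrix ℝ) ≠ 0) :
    Polynomial.eval x (Aalpha (subdivisionVertexJoin G H) α).charpoly =
      (x - 2*α) ^ (Fintype.card ↥G.edgeSet) *
      Matrix.det ((x - α*(Fintype.card W₁)) • (1 : Matrix W₂ W₂ ℝ) - Aalpha H α) *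
      (Matrix.det (ffun α x r (Fintype.card W₂) • (1 : Matrix W₁ W₁ ℝ)
          - cfun α x • G.adjMatrix ℝ) *
        (1 - (1-α)^2 * coronal (Aalpha H α) (x - α*(Fintype.card W₁)) * (Fintype.card W₁) /
          (ffun α x r (Fintype.card W₂) - cfun α x * r))) := by
  classical
  set n := Fintype.card W₁
  set k := Fintype.card W₂
  set c := cfun α x with hc
  set f := ffun α x r k with hf
  set D₂ := (x - α*(n:ℝ)) • (1 : Matrix W₂ W₂ ℝ) - Aalpha H α with hD₂
  set N := f • (1 : Matrix W₁ W₁ ℝ) - c • G.adjMatrix ℝ with hN'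
  rw [eval_charpoly'', block_decomp G H hr α x]
  -- invertibility of the lower-right block
  haveI iD₁ : Invertible ((x - 2*α) • (1 : Matrix ↥G.edgeSet ↥G.edgeSet ℝ)) :=
    ⟨(x - 2*α)⁻¹ • 1, by rw [smul_mul_smul_comm, inv_mul_cancel₀ hx1, one_mul, one_smul],
      by rw [smul_mul_smul_comm, mul_inv_cancel₀ hx1, one_mul, one_smul]⟩
  haveI iD₂ : Invertible D₂ := Matrix.invertibleOfIsUnitDet _ (isUnit_iff_ne_zero.mpr hH)
  haveI iD : Invertible
      (Matrix.fromBlocks ((x - 2*α) • (1 : Matrix ↥G.edgeSet ↥G.edgeSet ℝ)) 0 0 D₂) :=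
    Matrix.fromBlocksZero₂₁Invertible _ 0 _
  rw [Matrix.det_fromBlocks₂₂]
  have hinv : ⅟(Matrix.fromBlocks ((x - 2*α) • (1 : Matrix ↥G.edgeSet ↥G.edgeSet ℝ)) 0 0 D₂)
      = Matrix.fromBlocks ((x - 2*α)⁻¹ • 1) 0 0 (⅟D₂) := by
    rw [Matrix.invOf_fromBlocks_zero₂₁_eq]
    have h1 : ⅟((x - 2*α) • (1 : Matrix ↥G.edgeSet ↥G.edgeSet ℝ)) = (x - 2*α)⁻¹ • 1 := by
      rw [Matrix.invOf_eq_nonsing_inv]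
      apply Matrix.inv_eq_right_inv
      rw [smul_mul_smul_comm, mul_inv_cancel₀ hx1, one_mul, one_smul]
    rw [h1]
    simp [Matrix.mul_zero, Matrix.zero_mul]
  rw [hinv]
  rw [Matrix.fromCols_mul_fromBlocks, Matrix.fromCols_mul_fromRows]
  have hT₁ : (-(1-α)) • Rinc G * ((x - 2*α)⁻¹ • (1 : Matrix ↥G.edgeSet ↥G.edgeSet ℝ))
        * ((-(1-α)) • (Rinc G)ᵀ)
      = c • ((r:ℝ) • (1 : Matrix W₁ W₁ ℝ) + G.adjMatrix ℝ) := by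
    simp only [Matrix.smul_mul, Matrix.mul_smul, Matrix.mul_one, smul_smul]
    rw [RRT G hr]
    congr 1
    rw [hc, cfun]
    ring
  have hT₂ : (-(1-α)) • onesMat W₁ W₂ * ⅟D₂ * ((-(1-α)) • onesMat W₂ W₁)
      = ((1-α)^2 * coronal (Aalpha H α) (x - α*(n:ℝ))) • onesMat W₁ W₁ := by
    rw [Matrix.invOf_eq_nonsing_inv]
    simp only [Matrix.smul_mul, Matrix.mul_smul, smul_smul, ones_mul_mul_ones]
    congr 1
    simp only [coronal]
    rw [← hD₂]
    ring
  simp only [Matrix.mul_zero, Matrix.zero_mul, add_zero, zero_add, hT₁, hT₂]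
  set s := (1-α)^2 * coronal (Aalpha H α) (x - α*(n:ℝ)) with hs
  have hA0 : (x - α*((r:ℝ) + (k:ℝ))) • (1 : Matrix W₁ W₁ ℝ)
      - (c • ((r:ℝ) • (1 : Matrix W₁ W₁ ℝ) + G.adjMatrix ℝ) + s • onesMat W₁ W₁)
      = N - s • onesMat W₁ W₁ := by
    rw [hN', hf, ffun, ← hc]
    module
  have hNunit : IsUnit N.det := isUnit_iff_ne_zero.mpr hN
  have hmv : N *ᵥ Function.const W₁ (1:ℝ) = Function.const W₁ (f - c*(r:ℝ)) := by
    funext i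
    rw [hN', Matrix.sub_mulVec]
    simp [Matrix.smul_mulVec, Matrix.one_mulVec,
      SimpleGraph.adjMatrix_mulVec_const_apply_of_regular hr, mul_comm]
    exact Or.inl (hr i)
  have hmv2 : N⁻¹ *ᵥ Function.const W₁ (1:ℝ) = Function.const W₁ ((f - c*(r:ℝ))⁻¹) := by
    have h3 : Function.const W₁ (1:ℝ) = (f - c*(r:ℝ))⁻¹ • (N *ᵥ Function.const W₁ (1:ℝ)) := by
      rw [hmv]; funext i; simp [inv_mul_cancel₀ hfc]
    conv_lhs => rw [h3]
    rw [Matrix.mulVec_smul, Matrix.mulVec_mulVec, Matrix.nonsing_inv_mul N hNunit,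
      Matrix.one_mulVec]
    funext i
    simp
  have hsum : (∑ j, ∑ i, N⁻¹ i j) = (n:ℝ) * (f - c*(r:ℝ))⁻¹ := by
    rw [Finset.sum_comm]
    have : ∀ i, (∑ j, N⁻¹ i j) = (N⁻¹ *ᵥ Function.const W₁ (1:ℝ)) i := by
      intro i; simp [Matrix.mulVec, dotProduct]
    rw [Finset.sum_congr rfl (fun i _ => this i), hmv2]
    show ∑ _i : W₁, (f - c*(r:ℝ))⁻¹ = _
    simp [Finset.card_univ, mul_comm]
    exact Or.inl rfl
  have hcol : N - s • onesMat W₁ W₁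
      = N + Matrix.replicateCol Unit (fun _ : W₁ => -s) * Matrix.replicateRow Unit (fun _ : W₁ => (1:ℝ)) := by
    ext i j
    simp [Matrix.mul_apply, onesMat]
    ring
  rw [hA0, hcol, Matrix.det_add_replicateCol_mul_replicateRow hNunit]
  have hdet1 : Matrix.det ((1 : Matrix Unit Unit ℝ)
      + Matrix.replicateRow Unit (fun _ : W₁ => (1:ℝ)) * N⁻¹ * Matrix.replicateCol Unit (fun _ : W₁ => -s))
      = 1 - s * ((n:ℝ) * (f - c*(r:ℝ))⁻¹) := by
    rw [Matrix.det_unique]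
    simp only [Matrix.add_apply, Matrix.one_apply_eq, Matrix.mul_apply, Matrix.replicateRow_apply,
      Matrix.replicateCol_apply, one_mul]
    rw [show (∑ j, (∑ i, N⁻¹ i j) * (-s)) = (∑ j, ∑ i, N⁻¹ i j) * (-s) from
      (Finset.sum_mul _ _ _).symm, hsum]
    ring
  have hD₂' : (x - α * ((Fintype.card W₁ : ℕ):ℝ)) • (1 : Matrix W₂ W₂ ℝ) - Aalpha H α = D₂ := by
    rw [hD₂]
  rw [hdet1, Matrix.det_fromBlocks_zero₂₁, hD₂', show Matrix.det ((x - 2*α) • (1 : Matrix ↥G.edgeSet ↥G.edgeSet ℝ)) = (x - 2*α) ^ (Fintype.card ↥G.edgeSet) by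
    rw [Matrix.det_smul, Matrix.det_one, mul_one]]
  rw [div_eq_mul_inv, hs]
  ring

section Support
variable {m : Type*} [Fintype m]

lemma det_eq_of_charpoly_eq {M₁ M₂ : Matrix m m ℝ} (h : M₁.charpoly = M₂.charpoly) (a b : ℝ) :
    (a • (1 : Matrix m m ℝ) - b • M₁).det = (a • (1 : Matrix m m ℝ) - b • M₂).det := by
  rcases eq_or_ne b 0 with hb | hb
  · simp [hb]
  · have key : ∀ M : Matrix m m ℝ, a • (1 : Matrix m m ℝ) - b • M = b • ((a/b) • 1 - M) := by
      intro M
      have hba : b * (a/b) = a := by field_simp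
      rw [smul_sub, smul_smul, hba]
    rw [key M₁, key M₂, Matrix.det_smul, Matrix.det_smul, ← eval_charpoly'', ← eval_charpoly'', h]

lemma Aalpha_reg {G : SimpleGraph m} {r : ℕ} (hG : G.IsRegularOfDegree r) (α : ℝ) :
    Aalpha G α = (α*(r:ℝ)) • (1 : Matrix m m ℝ) + (1-α) • G.adjMatrix ℝ := by
  have hdiag : Matrix.diagonal (fun v => (G.degree v : ℝ)) = (r:ℝ) • (1 : Matrix m m ℝ) := by
    ext i j
    by_cases hij : i = j <;> simp [hij, hG i, hG j, Matrix.one_apply]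
  rw [Aalpha, hdiag, smul_smul]

lemma det_adj_eq {G₁ G₂ : SimpleGraph m} {r : ℕ} (h₁ : G₁.IsRegularOfDegree r)
    (h₂ : G₂.IsRegularOfDegree r) {α : ℝ} (hα : α ≠ 1)
    (h : cpC (Aalpha G₁ α) = cpC (Aalpha G₂ α)) (a b : ℝ) :
    (a • (1 : Matrix m m ℝ) - b • G₁.adjMatrix ℝ).det
      = (a • (1 : Matrix m m ℝ) - b • G₂.adjMatrix ℝ).det := by
  unfold cpC at h
  have h1α : (1:ℝ) - α ≠ 0 := sub_ne_zero.mpr (Ne.symm hα)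
  have hrep : ∀ (G : SimpleGraph m), G.IsRegularOfDegree r →
      a • (1 : Matrix m m ℝ) - b • G.adjMatrix ℝ
        = (a + b*α*(r:ℝ)/(1-α)) • 1 - (b/(1-α)) • (Aalpha G α) := by
    intro G hG
    rw [Aalpha_reg hG, smul_add, smul_smul, smul_smul]
    have e1 : b/(1-α)*(α*(r:ℝ)) = b*α*(r:ℝ)/(1-α) := by field_simp
    have e2 : b/(1-α)*(1-α) = b := by field_simp
    rw [e1, e2, add_smul, sub_add_eq_sub_sub, add_sub_cancel_right]
  rw [hrep G₁ h₁, hrep G₂ h₂, det_eq_of_charpoly_eq h]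

end Support

section Support2
variable {m : Type*} [Fintype m]

lemma root_of_regular {G : SimpleGraph m} {r : ℕ} (hG : G.IsRegularOfDegree r) (α : ℝ)
    [Nonempty m] : Polynomial.eval (r:ℝ) (cpC (Aalpha G α)) = 0 := by
  classical
  unfold cpC
  rw [eval_charpoly'']
  rw [← Matrix.exists_mulVec_eq_zero_iff]
  refine ⟨Function.const m (1:ℝ), ?_, ?_⟩
  · intro h0
    have := congrFun h0 (Classical.arbitrary m)
    simp [Function.const] at this
  · funext i
    rw [Matrix.sub_mulVec, Aalpha_reg hG, Matrix.add_mulVec, Matrix.smul_mulVec,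
      Matrix.smul_mulVec, Matrix.smul_mulVec, Matrix.one_mulVec]
    simp [SimpleGraph.adjMatrix_mulVec_const_apply_of_regular hG]
    rw [hG i]
    ring

lemma root_le_of_regular {G : SimpleGraph m} {r : ℕ} (hG : G.IsRegularOfDegree r) {α : ℝ}
    (hα : α ∈ Set.Icc (0:ℝ) 1) {lam : ℝ}
    (hroot : Polynomial.eval lam (cpC (Aalpha G α)) = 0) : lam ≤ r := by
  classical
  unfold cpC at hroot
  rw [eval_charpoly''] at hroot
  obtain ⟨v, hv0, hv⟩ := Matrix.exists_mulVec_eq_zero_iff.mpr hroot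
  haveI : Nonempty m := by
    by_contra h
    exact hv0 (funext fun i => absurd (⟨i⟩ : Nonempty m) h)
  obtain ⟨i, -, hi⟩ := Finset.exists_max_image Finset.univ (fun j => |v j|)
    ⟨Classical.arbitrary m, Finset.mem_univ _⟩
  have hvi : 0 < |v i| := by
    rcases lt_or_eq_of_le (abs_nonneg (v i)) with h | h
    · exact h
    · exfalso
      apply hv0
      funext j
      have := hi j (Finset.mem_univ j)
      rw [← h] at this
      have := abs_nonpos_iff.mp (le_of_le_of_eq this rfl)
      simpa using this
  have h0 := congrFun hv i
  rw [Matrix.sub_mulVec, Aalpha_reg hG, Matrix.add_mulVec, Matrix.smul_mulVec,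
    Matrix.smul_mulVec, Matrix.one_mulVec] at h0
  simp only [Matrix.smul_mulVec, Pi.add_apply, Pi.sub_apply, Pi.smul_apply, smul_eq_mul,
    Pi.zero_apply] at h0
  -- h0 : lam * v i - (α * r * v i + (1-α) * (adj *ᵥ v) i) = 0
  have hS : ((G.adjMatrix ℝ) *ᵥ v) i = ∑ j, if G.Adj i j then v j else 0 := by
    simp [Matrix.mulVec, dotProduct, SimpleGraph.adjMatrix_apply, ite_mul]
  have hSle : |((G.adjMatrix ℝ) *ᵥ v) i| ≤ (r:ℝ) * |v i| := by
    rw [hS]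
    calc |∑ j, if G.Adj i j then v j else 0| ≤ ∑ j, |if G.Adj i j then v j else 0| :=
          Finset.abs_sum_le_sum_abs _ _
      _ ≤ ∑ j, if G.Adj i j then |v i| else 0 := by
          apply Finset.sum_le_sum
          intro j _
          by_cases hj : G.Adj i j
          · simpa [hj] using hi j (Finset.mem_univ j)
          · simp [hj]
      _ = (∑ j, if G.Adj i j then (1:ℝ) else 0) * |v i| := by
          rw [Finset.sum_mul]
          congr 1; funext j; split_ifs <;> ring
      _ = (r:ℝ) * |v i| := by rw [sum_row_adj, hG i]
  have h1α : (0:ℝ) ≤ 1 - α := by linarith [hα.2]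
  have hmain : |lam - α*(r:ℝ)| * |v i| ≤ (1-α) * ((r:ℝ) * |v i|) := by
    have : (lam - α*(r:ℝ)) * v i = (1-α) * ((G.adjMatrix ℝ) *ᵥ v) i := by linarith [h0]
    calc |lam - α*(r:ℝ)| * |v i| = |(lam - α*(r:ℝ)) * v i| := (abs_mul _ _).symm
      _ = |(1-α) * ((G.adjMatrix ℝ) *ᵥ v) i| := by rw [this]
      _ = (1-α) * |((G.adjMatrix ℝ) *ᵥ v) i| := by rw [abs_mul, abs_of_nonneg h1α]
      _ ≤ (1-α) * ((r:ℝ) * |v i|) := by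
          apply mul_le_mul_of_nonneg_left hSle h1α
  have habs : |lam - α*(r:ℝ)| ≤ (1-α) * (r:ℝ) := by
    have := (mul_le_mul_iff_of_pos_right hvi).mp (by linarith [hmain] : |lam - α*(r:ℝ)| * |v i| ≤ ((1-α)*(r:ℝ)) * |v i|)
    exact this
  have := abs_le.mp habs
  linarith [this.2]

end Support2

section Support3

lemma wpoly_natDegree (a b c : ℝ) :
    ((X - C a) * (X - C b) - C c : ℝ[X]).natDegree = 2 := by
  rw [Polynomial.natDegree_sub_C, Polynomial.natDegree_mul (Polynomial.X_sub_C_ne_zero a)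
    (Polynomial.X_sub_C_ne_zero b), Polynomial.natDegree_X_sub_C, Polynomial.natDegree_X_sub_C]

lemma comp_w_ne_zero {p : ℝ[X]} (hp : p ≠ 0) (a b c : ℝ) :
    p.comp ((X - C a) * (X - C b) - C c) ≠ 0 := by
  intro hcomp
  rcases Polynomial.comp_eq_zero_iff.mp hcomp with h | ⟨-, h⟩
  · exact hp h
  · have := congrArg Polynomial.natDegree h
    rw [wpoly_natDegree, Polynomial.natDegree_C] at this
    exact two_ne_zero this

lemma comp_lin_ne_zero {p : ℝ[X]} (hp : p ≠ 0) (a : ℝ) : p.comp (X - C a) ≠ 0 := by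
  intro hcomp
  rcases Polynomial.comp_eq_zero_iff.mp hcomp with h | ⟨-, h⟩
  · exact hp h
  · have := congrArg Polynomial.natDegree h
    rw [Polynomial.natDegree_X_sub_C, Polynomial.natDegree_C] at this
    exact one_ne_zero this

lemma eval_comp_lin (p : ℝ[X]) (a x : ℝ) :
    Polynomial.eval x (p.comp (X - C a)) = Polynomial.eval (x - a) p := by
  simp [Polynomial.eval_comp]

lemma eval_comp_w (p : ℝ[X]) (a b c x : ℝ) :
    Polynomial.eval x (p.comp ((X - C a) * (X - C b) - C c))
      = Polynomial.eval ((x - a) * (x - b) - c) p := by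
  simp [Polynomial.eval_comp]

variable {W : Type*} [Fintype W]

lemma ffc_ne_zero {α x : ℝ} (r k : ℕ) (hx1 : x - 2*α ≠ 0)
    (h : (x - 2*α)*(x - α*((r:ℝ)+(k:ℝ))) - 2*(1-α)^2*(r:ℝ) ≠ 0) :
    ffun α x r k - cfun α x * r ≠ 0 := by
  intro h0
  apply h
  have e : (x - 2*α) * (ffun α x r k - cfun α x * r)
      = (x - 2*α)*(x - α*((r:ℝ)+(k:ℝ))) - 2*(1-α)^2*(r:ℝ) := by
    rw [ffun, cfun]
    field_simp
    ring
  rw [← e, h0, mul_zero]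

lemma detN_ne_zero (G : SimpleGraph W) {α x : ℝ} (r k : ℕ) (hx1 : x - 2*α ≠ 0)
    (h : Polynomial.eval ((x - 2*α)*(x - α*((r:ℝ)+(k:ℝ))) - (1-α)^2*(r:ℝ))
      (cpC ((1-α)^2 • G.adjMatrix ℝ)) ≠ 0) :
    Matrix.det (ffun α x r k • (1 : Matrix W W ℝ) - cfun α x • G.adjMatrix ℝ) ≠ 0 := by
  classical
  unfold cpC at h
  rw [eval_charpoly''] at h
  have e1 : (x - 2*α) * ffun α x r k = (x - 2*α)*(x - α*((r:ℝ)+(k:ℝ))) - (1-α)^2*(r:ℝ) := by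
    rw [ffun, cfun]
    field_simp
  have e2 : (x - 2*α) * cfun α x = (1-α)^2 := by
    rw [cfun]
    field_simp
  have hkey : ((x - 2*α)*(x - α*((r:ℝ)+(k:ℝ))) - (1-α)^2*(r:ℝ)) • (1 : Matrix W W ℝ)
      - (1-α)^2 • G.adjMatrix ℝ
      = (x - 2*α) • (ffun α x r k • (1 : Matrix W W ℝ) - cfun α x • G.adjMatrix ℝ) := by
    rw [smul_sub, smul_smul, smul_smul, e1, e2]
  intro h0
  apply h
  rw [hkey, Matrix.det_smul, h0, mul_zero]

lemma detD2_ne_zero (H : SimpleGraph W) {α x : ℝ} (a : ℝ)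
    (h : Polynomial.eval x ((cpC (Aalpha H α)).comp (X - C a)) ≠ 0) :
    Matrix.det ((x - a) • (1 : Matrix W W ℝ) - Aalpha H α) ≠ 0 := by
  classical
  unfold cpC at h
  rw [eval_comp_lin, eval_charpoly''] at h
  exact h

lemma twice_card_edges (G : SimpleGraph W) {r : ℕ} (hG : G.IsRegularOfDegree r) :
    2 * Fintype.card ↥G.edgeSet = Fintype.card W * r := by
  classical
  rw [← Set.toFinset_card]
  rw [show G.edgeSet.toFinset = G.edgeFinset from rfl]
  rw [← SimpleGraph.sum_degrees_eq_twice_card_edges]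
  rw [Finset.sum_congr rfl (fun v _ => hG v), Finset.sum_const, Finset.card_univ, smul_eq_mul]

end Support3

section Support4
variable {m : Type*} [Fintype m]

lemma cpC_ne_zero (M : Matrix m m ℝ) : cpC M ≠ 0 := by
  unfold cpC
  exact (Matrix.charpoly_monic M).ne_zero

lemma detN_eq {G₁ G₂ : SimpleGraph m} {r : ℕ} (h₁ : G₁.IsRegularOfDegree r)
    (h₂ : G₂.IsRegularOfDegree r) {α : ℝ} (hcpc : cpC (Aalpha G₁ α) = cpC (Aalpha G₂ α))
    (a b : ℝ) (hb : α = 1 → b = 0) :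
    (a • (1 : Matrix m m ℝ) - b • G₁.adjMatrix ℝ).det
      = (a • (1 : Matrix m m ℝ) - b • G₂.adjMatrix ℝ).det := by
  by_cases hα1 : α = 1
  · rw [hb hα1]; simp
  · exact det_adj_eq h₁ h₂ hα1 hcpc a b

lemma detD2_swap {H₁ H₂ : SimpleGraph m} {α : ℝ}
    (hcpc : cpC (Aalpha H₁ α) = cpC (Aalpha H₂ α)) (y : ℝ) :
    Matrix.det (y • (1 : Matrix m m ℝ) - Aalpha H₂ α)
      = Matrix.det (y • (1 : Matrix m m ℝ) - Aalpha H₁ α) := by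
  unfold cpC at hcpc
  rw [← eval_charpoly'', ← eval_charpoly'', hcpc]

lemma card_edges_eq {G₁ G₂ : SimpleGraph m} {r : ℕ} (h₁ : G₁.IsRegularOfDegree r)
    (h₂ : G₂.IsRegularOfDegree r) :
    Fintype.card ↥G₁.edgeSet = Fintype.card ↥G₂.edgeSet := by
  have t₁ := twice_card_edges G₁ h₁
  have t₂ := twice_card_edges G₂ h₂
  omega

lemma regular_degree_eq [Nonempty m] {G₁ G₂ : SimpleGraph m} {r₁ r₂ : ℕ}
    (h₁ : G₁.IsRegularOfDegree r₁) (h₂ : G₂.IsRegularOfDegree r₂) {α : ℝ}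
    (hα : α ∈ Set.Icc (0:ℝ) 1) (hcpc : cpC (Aalpha G₁ α) = cpC (Aalpha G₂ α)) :
    r₁ = r₂ := by
  have hle₁ : (r₂:ℝ) ≤ r₁ :=
    root_le_of_regular h₁ hα (by rw [hcpc]; exact root_of_regular h₂ α)
  have hle₂ : (r₁:ℝ) ≤ r₂ :=
    root_le_of_regular h₂ hα (by rw [← hcpc]; exact root_of_regular h₁ α)
  exact_mod_cast le_antisymm hle₂ hle₁

end Support4

/-- Corollary: constructions of `A_α`-cospectral pairs from subdivision-vertex joins.
(1) Joining two `A_α`-cospectral regular graphs with the same arbitrary graph `H` gives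
`A_α`-cospectral graphs.  (2) Joining a regular graph `G` with two `A_α`-cospectral
graphs having equal `A_α`-coronals gives `A_α`-cospectral graphs. -/
theorem Aalpha_cospectral_subdivisionVertexJoin
    (α : ℝ) (hα : α ∈ Set.Icc (0 : ℝ) 1) :
    (∀ (n₁ n₂ k r₁ r₂ : ℕ) (G₁ : SimpleGraph (Fin n₁)) (G₂ : SimpleGraph (Fin n₂))
        (H : SimpleGraph (Fin k)),
      G₁.IsRegularOfDegree r₁ → G₂.IsRegularOfDegree r₂ →
      (Aalpha G₁ α).charpoly = (Aalpha G₂ α).charpoly →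
      (Aalpha (subdivisionVertexJoin G₁ H) α).charpoly =
        (Aalpha (subdivisionVertexJoin G₂ H) α).charpoly) ∧
    (∀ (n k₁ k₂ r : ℕ) (G : SimpleGraph (Fin n)) (H₁ : SimpleGraph (Fin k₁))
        (H₂ : SimpleGraph (Fin k₂)),
      G.IsRegularOfDegree r →
      (Aalpha H₁ α).charpoly = (Aalpha H₂ α).charpoly →
      (∀ x : ℝ, coronal (Aalpha H₁ α) x = coronal (Aalpha H₂ α) x) →
      (Aalpha (subdivisionVertexJoin G H₁) α).charpoly =
        (Aalpha (subdivisionVertexJoin G H₂) α).charpoly) := by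
  constructor
  · -- Part 1
    intro n₁ n₂ k r₁ r₂ G₁ G₂ H h₁ h₂ hchar
    have hn : n₁ = n₂ := by
      have := congrArg Polynomial.natDegree hchar
      simpa using this
    subst hn
    have hcharC : cpC (Aalpha G₁ α) = cpC (Aalpha G₂ α) := by
      unfold cpC
      convert hchar using 2
    have h₂' : G₂.IsRegularOfDegree r₁ := by
      rcases Nat.eq_zero_or_pos n₁ with hn0 | hn0
      · intro v
        exact absurd v.2 (by omega)
      · haveI : Nonempty (Fin n₁) := Fin.pos_iff_nonempty.mp hn0
        have := regular_degree_eq h₁ h₂ hα hcharC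
        rw [this]; exact h₂
    set K := Fintype.card (Fin k) with hK
    set q₁ : ℝ[X] := X - C (2*α) with hq₁d
    set q₂ : ℝ[X] := (cpC (Aalpha H α)).comp (X - C (α*(Fintype.card (Fin n₁) : ℝ))) with hq₂d
    set q₃ : ℝ[X] := (X - C (2*α)) * (X - C (α*((r₁:ℝ)+(K:ℝ)))) - C (2*(1-α)^2*(r₁:ℝ)) with hq₃d
    set q₄ : ℝ[X] := (cpC ((1-α)^2 • G₁.adjMatrix ℝ)).comp
      ((X - C (2*α)) * (X - C (α*((r₁:ℝ)+(K:ℝ)))) - C ((1-α)^2*(r₁:ℝ))) with hq₄d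
    have hq₁ : q₁ ≠ 0 := Polynomial.X_sub_C_ne_zero _
    have hq₂ : q₂ ≠ 0 :=
      comp_lin_ne_zero (cpC_ne_zero _) _
    have hq₃ : q₃ ≠ 0 := by
      intro h
      have := wpoly_natDegree (2*α) (α*((r₁:ℝ)+(K:ℝ))) (2*(1-α)^2*(r₁:ℝ))
      rw [← hq₃d, h] at this
      simp at this
    have hq₄ : q₄ ≠ 0 :=
      comp_w_ne_zero (cpC_ne_zero _) _ _ _
    apply Polynomial.eq_of_infinite_eval_eq
    have hfin : ({x : ℝ | q₁.IsRoot x} ∪ {x | q₂.IsRoot x} ∪ {x | q₃.IsRoot x}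
        ∪ {x | q₄.IsRoot x}).Finite :=
      (((Polynomial.finite_setOf_isRoot hq₁).union (Polynomial.finite_setOf_isRoot hq₂)).union
        (Polynomial.finite_setOf_isRoot hq₃)).union (Polynomial.finite_setOf_isRoot hq₄)
    refine Set.Infinite.mono ?_ hfin.infinite_compl
    intro x hx
    simp only [Set.mem_compl_iff, Set.mem_union, not_or, Set.mem_setOf_eq] at hx
    obtain ⟨⟨⟨hx1', hx2'⟩, hx3'⟩, hx4'⟩ := hx
    have hx1 : x - 2*α ≠ 0 := by
      intro h
      exact hx1' (by simp [hq₁d, Polynomial.IsRoot, h])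
    have hH := detD2_ne_zero H (α*((Fintype.card (Fin n₁)):ℝ)) (x := x) hx2'
    have hfc : ffun α x r₁ K - cfun α x * r₁ ≠ 0 := by
      apply ffc_ne_zero r₁ K hx1
      intro h0
      apply hx3'
      show Polynomial.eval x q₃ = 0
      rw [hq₃d]
      simpa using h0
    have hx4'' : Polynomial.eval ((x - 2*α)*(x - α*((r₁:ℝ)+(K:ℝ))) - (1-α)^2*(r₁:ℝ))
        (cpC ((1-α)^2 • G₁.adjMatrix ℝ)) ≠ 0 := by
      rw [← eval_comp_w]
      exact hx4'
    have hN₁ := detN_ne_zero G₁ r₁ K hx1 hx4''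
    have hNswap := detN_eq h₁ h₂' hcharC (ffun α x r₁ K) (cfun α x)
      (fun h1 => by simp [cfun, h1])
    have hN₂ := hN₁
    rw [hNswap] at hN₂
    have e₁ := key G₁ H h₁ α x hx1 hH hfc hN₁
    have e₂ := key G₂ H h₂' α x hx1 hH hfc hN₂
    rw [card_edges_eq h₁ h₂', hNswap] at e₁
    have h3 := e₁.trans e₂.symm
    show Polynomial.eval x _ = Polynomial.eval x _
    refine Eq.trans ?_ (h3.trans ?_) <;> congr!
  · -- Part 2
    intro n k₁ k₂ r G H₁ H₂ hG hchar hcor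
    have hk : k₁ = k₂ := by
      have := congrArg Polynomial.natDegree hchar
      simpa using this
    subst hk
    have hcharC : cpC (Aalpha H₁ α) = cpC (Aalpha H₂ α) := by
      unfold cpC
      convert hchar using 2
    set K := Fintype.card (Fin k₁) with hK
    set q₁ : ℝ[X] := X - C (2*α) with hq₁d
    set q₂ : ℝ[X] := (cpC (Aalpha H₁ α)).comp (X - C (α*(Fintype.card (Fin n) : ℝ))) with hq₂d
    set q₃ : ℝ[X] := (X - C (2*α)) * (X - C (α*((r:ℝ)+(K:ℝ)))) - C (2*(1-α)^2*(r:ℝ)) with hq₃d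
    set q₄ : ℝ[X] := (cpC ((1-α)^2 • G.adjMatrix ℝ)).comp
      ((X - C (2*α)) * (X - C (α*((r:ℝ)+(K:ℝ)))) - C ((1-α)^2*(r:ℝ))) with hq₄d
    have hq₁ : q₁ ≠ 0 := Polynomial.X_sub_C_ne_zero _
    have hq₂ : q₂ ≠ 0 :=
      comp_lin_ne_zero (cpC_ne_zero _) _
    have hq₃ : q₃ ≠ 0 := by
      intro h
      have := wpoly_natDegree (2*α) (α*((r:ℝ)+(K:ℝ))) (2*(1-α)^2*(r:ℝ))
      rw [← hq₃d, h] at this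
      simp at this
    have hq₄ : q₄ ≠ 0 :=
      comp_w_ne_zero (cpC_ne_zero _) _ _ _
    apply Polynomial.eq_of_infinite_eval_eq
    have hfin : ({x : ℝ | q₁.IsRoot x} ∪ {x | q₂.IsRoot x} ∪ {x | q₃.IsRoot x}
        ∪ {x | q₄.IsRoot x}).Finite :=
      (((Polynomial.finite_setOf_isRoot hq₁).union (Polynomial.finite_setOf_isRoot hq₂)).union
        (Polynomial.finite_setOf_isRoot hq₃)).union (Polynomial.finite_setOf_isRoot hq₄)
    refine Set.Infinite.mono ?_ hfin.infinite_compl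
    intro x hx
    simp only [Set.mem_compl_iff, Set.mem_union, not_or, Set.mem_setOf_eq] at hx
    obtain ⟨⟨⟨hx1', hx2'⟩, hx3'⟩, hx4'⟩ := hx
    have hx1 : x - 2*α ≠ 0 := by
      intro h
      exact hx1' (by simp [hq₁d, Polynomial.IsRoot, h])
    have hH₁ := detD2_ne_zero H₁ (α*((Fintype.card (Fin n)):ℝ)) (x := x) hx2'
    have hH₂ := hH₁
    rw [← detD2_swap hcharC] at hH₂
    have hfc : ffun α x r K - cfun α x * r ≠ 0 := by
      apply ffc_ne_zero r K hx1
      intro h0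
      apply hx3'
      show Polynomial.eval x q₃ = 0
      rw [hq₃d]
      simpa using h0
    have hx4'' : Polynomial.eval ((x - 2*α)*(x - α*((r:ℝ)+(K:ℝ))) - (1-α)^2*(r:ℝ))
        (cpC ((1-α)^2 • G.adjMatrix ℝ)) ≠ 0 := by
      rw [← eval_comp_w]
      exact hx4'
    have hN := detN_ne_zero G r K hx1 hx4''
    have e₁ := key G H₁ hG α x hx1 hH₁ hfc hN
    have e₂ := key G H₂ hG α x hx1 hH₂ hfc hN
    rw [← detD2_swap hcharC, hcor (x - α*((Fintype.card (Fin n)):ℝ))] at e₁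
    have h3 := e₁.trans e₂.symm
    show Polynomial.eval x _ = Polynomial.eval x _
    refine Eq.trans ?_ (h3.trans ?_) <;> congr!
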